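/- Let w = x φ^μ y ∈ W̃ with μ dominant, x, y ∈ W₀, φ^μ y ∈ ^S W̃, and set Φ_w = {α ∈ Φ₊ : ⟨α, μ⟩ − δ⁻(y^{-1}α) + δ⁻(xα) = 0}, where δ⁻ is the indicator of negative roots. Then y·LP(w) = {r^{-1} ∈ W₀ : r(Φ₊ \ Φ_w) ⊆ Φ₊}, where LP(w) = {v ∈ W₀ : ⟨vα, y^{-1}μ⟩ + δ⁺(vα) − δ⁺(xyvα) ≥ 0 for all α ∈ Φ₊}. -/

import Mathlib

/-- with w = x φ^μ y as usual and
Φ_w = {α ∈ Φ₊ : ⟨α, μ⟩ − δ⁻(y⁻¹α) + δ⁻(xα) = 0}, one has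
y·LP(w) = {r⁻¹ : r(Φ₊ \ Φ_w) ⊆ Φ₊}. Roots are encoded as pairs (i,j), i < j. -/
theorem stmt_11 (n : ℕ) (μ : Fin n → ℤ) (x y : Equiv.Perm (Fin n))
    (hdom : ∀ i j : Fin n, i ≤ j → μ j ≤ μ i)
    (hy : ∀ i j : Fin n, i < j → (if y⁻¹ j < y⁻¹ i then (1 : ℤ) else 0) ≤ μ i - μ j)
    (LP : Set (Equiv.Perm (Fin n)))
    (hLP : LP = {v | ∀ i j : Fin n, i < j →
      (0 : ℤ) ≤ μ (y (v i)) - μ (y (v j)) + (if v i < v j then 1 else 0) -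
        (if x (y (v i)) < x (y (v j)) then 1 else 0)})
    (Φw : Set (Fin n × Fin n))
    (hΦw : Φw = {p | p.1 < p.2 ∧
      μ p.1 - μ p.2 - (if y⁻¹ p.2 < y⁻¹ p.1 then 1 else 0) +
        (if x p.2 < x p.1 then 1 else 0) = 0}) :
    {u : Equiv.Perm (Fin n) | ∃ v ∈ LP, u = y * v} =
      {u : Equiv.Perm (Fin n) | ∀ i j : Fin n, i < j → (i, j) ∉ Φw → u⁻¹ i < u⁻¹ j} := by
  subst hLP hΦw
  set F : Fin n → Fin n → ℤ := fun a b =>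
    μ a - μ b + (if y⁻¹ a < y⁻¹ b then 1 else 0) - (if x a < x b then 1 else 0) with hF
  have hinjx : ∀ a b : Fin n, a ≠ b → x a ≠ x b := fun a b h e => h (x.injective e)
  have hinjy : ∀ a b : Fin n, a ≠ b → y⁻¹ a ≠ y⁻¹ b := fun a b h e => h (y⁻¹.injective e)
  -- antisymmetry
  have hanti : ∀ a b : Fin n, a ≠ b → F b a = -F a b := by
    intro a b h
    rcases (hinjx a b h).lt_or_gt with h3 | h3 <;>
      rcases (hinjy a b h).lt_or_gt with h4 | h4 <;>
        simp only [hF, h3, h4, h3.asymm, h4.asymm, if_true, if_false] <;> ring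
  -- positivity on positive roots
  have hpos : ∀ i j : Fin n, i < j → 0 ≤ F i j := by
    intro i j hij
    have h1 := hy i j hij
    rcases (hinjy i j hij.ne).lt_or_gt with h2 | h2 <;>
      simp only [hF, h2, h2.asymm, if_true, if_false] at h1 ⊢ <;>
        split_ifs <;> omega
  -- characterization of Φw
  have hΦ : ∀ i j : Fin n, i < j →
      (((i, j) ∈ {p : Fin n × Fin n | p.1 < p.2 ∧
        μ p.1 - μ p.2 - (if y⁻¹ p.2 < y⁻¹ p.1 then 1 else 0) +
          (if x p.2 < x p.1 then 1 else 0) = 0}) ↔ F i j = 0) := by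
    intro i j hij
    simp only [Set.mem_setOf_eq, hij, true_and, hF]
    rcases (hinjx i j hij.ne).lt_or_gt with h3 | h3 <;>
      rcases (hinjy i j hij.ne).lt_or_gt with h4 | h4 <;>
        simp only [h3, h4, h3.asymm, h4.asymm, if_true, if_false] <;>
          constructor <;> intro <;> omega
  ext u
  simp only [Set.mem_setOf_eq]
  constructor
  · rintro ⟨v, hv, rfl⟩
    intro i j hij hmem
    have hFne : F i j ≠ 0 := fun h => hmem ((hΦ i j hij).mpr h)
    have hFpos : 0 < F i j := lt_of_le_of_ne (hpos i j hij) (Ne.symm hFne)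
    have hne : (y * v)⁻¹ i ≠ (y * v)⁻¹ j := fun e => hij.ne ((y * v)⁻¹.injective e)
    by_contra hle
    push_neg at hle
    have hlt : (y * v)⁻¹ j < (y * v)⁻¹ i := lt_of_le_of_ne hle (Ne.symm hne)
    have hv' := hv _ _ hlt
    have e1 : v ((y * v)⁻¹ j) = y⁻¹ j := by
      simp [mul_inv_rev, Equiv.Perm.mul_apply]
    have e2 : v ((y * v)⁻¹ i) = y⁻¹ i := by
      simp [mul_inv_rev, Equiv.Perm.mul_apply]
    rw [e1, e2] at hv'
    simp only [Equiv.Perm.inv_def, Equiv.apply_symm_apply] at hv'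
    have hFji : 0 ≤ F j i := hv'
    rw [hanti i j hij.ne] at hFji
    omega
  · intro h
    refine ⟨y⁻¹ * u, ?_, by group⟩
    intro i j hij
    have e1 : y ((y⁻¹ * u) i) = u i := by simp [Equiv.Perm.mul_apply]
    have e2 : y ((y⁻¹ * u) j) = u j := by simp [Equiv.Perm.mul_apply]
    have e3 : ((y⁻¹ * u) i) = y⁻¹ (u i) := by simp [Equiv.Perm.mul_apply]
    have e4 : ((y⁻¹ * u) j) = y⁻¹ (u j) := by simp [Equiv.Perm.mul_apply]
    rw [e1, e2, e3, e4]
    have hgoal : 0 ≤ F (u i) (u j) := by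
      have hne : u i ≠ u j := fun e => hij.ne (u.injective e)
      rcases hne.lt_or_gt with hab | hab
      · exact hpos _ _ hab
      · have hz : F (u j) (u i) = 0 := by
          by_contra hz
          have hnm : (u j, u i) ∉ {p : Fin n × Fin n | p.1 < p.2 ∧
              μ p.1 - μ p.2 - (if y⁻¹ p.2 < y⁻¹ p.1 then 1 else 0) +
                (if x p.2 < x p.1 then 1 else 0) = 0} :=
            fun hm => hz ((hΦ _ _ hab).mp hm)
          have hlt := h _ _ hab hnm
          simp only [Equiv.Perm.inv_def, Equiv.symm_apply_apply] at hlt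
          exact absurd hij (by omega)
        have hanti' := hanti (u j) (u i) hab.ne
        omega
    simpa only [hF] using hgoal
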